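/- As formal power series over the integers (or as convergent products for |q| < 1), the infinite product ∏_{k≥1} 1/(1+q^k) equals ∏_{k≥0} (1 − q^{2k+1}). -/

import Mathlib

open Filter Complex Topology

lemma euler_aux {g : ℕ → ℂ} (hg : Summable fun k => ‖g k‖) (h1 : ∀ k, ‖g k‖ < 1) :
    HasProd (fun k => 1 + g k) (∏' k, (1 + g k)) ∧ (∏' k, (1 + g k)) ≠ 0 := by
  have hne : ∀ k, (1 : ℂ) + g k ≠ 0 := by
    intro k h
    have h2 : g k = -1 := by linear_combination h
    have := h1 k
    rw [h2] at this
    simp at this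
  have hlog : Summable fun k => Complex.log (1 + g k) := by
    have ht : Tendsto (fun k => ‖g k‖) atTop (𝓝 0) := hg.tendsto_atTop_zero
    have hev : ∀ᶠ k in atTop, ‖g k‖ ≤ 1/2 :=
      ht.eventually (eventually_le_nhds (by norm_num))
    apply Summable.of_norm_bounded_eventually_nat (g := fun k => 3/2 * ‖g k‖) (hg.mul_left _)
    filter_upwards [hev] with k hk
    exact Complex.norm_log_one_add_half_le_self hk
  have hP := Complex.hasProd_of_hasSum_log (f := fun k => 1 + g k)
      hne hlog.hasSum
  have hE : cexp (∑' k, Complex.log (1 + g k)) = ∏' k, (1 + g k) :=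
      Complex.cexp_tsum_eq_tprod (f := fun k => 1 + g k) hne hlog
  refine ⟨hP.multipliable.hasProd, ?_⟩
  rw [← hE]
  exact Complex.exp_ne_zero _

lemma hasProd_inv {f : ℕ → ℂ} {a : ℂ} (h : HasProd f a) (ha : a ≠ 0) :
    HasProd (fun k => (f k)⁻¹) a⁻¹ := by
  have h2 : Tendsto (fun s : Finset ℕ => (∏ i ∈ s, f i)⁻¹) atTop (𝓝 a⁻¹) :=
    Filter.Tendsto.inv₀ (h : Tendsto _ atTop (𝓝 a)) ha
  simpa [HasProd, Finset.prod_inv_distrib] using h2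

theorem stmt_4 (q : ℂ) (hq : ‖q‖ < 1) :
    (∏' k : ℕ, (1 + q ^ (k + 1))⁻¹) = ∏' k : ℕ, (1 - q ^ (2 * k + 1)) := by
  have h0 : 0 ≤ ‖q‖ := norm_nonneg q
  have hgeo : Summable fun k : ℕ => ‖q‖ ^ (k + 1) := by
    simpa [pow_succ] using (summable_geometric_of_lt_one h0 hq).mul_right ‖q‖
  have hkey : ∀ e : ℕ → ℕ, (∀ k, k + 1 ≤ e k) → ∀ s : ℂ, ‖s‖ = 1 →
      (Summable fun k => ‖s * q ^ (e k)‖) ∧ ∀ k, ‖s * q ^ (e k)‖ < 1 := by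
    intro e he s hs
    have hb : ∀ k, ‖s * q ^ (e k)‖ ≤ ‖q‖ ^ (k + 1) := by
      intro k
      rw [norm_mul, hs, one_mul, norm_pow]
      exact pow_le_pow_of_le_one h0 hq.le (he k)
    refine ⟨Summable.of_nonneg_of_le (fun k => norm_nonneg _) hb hgeo, fun k => ?_⟩
    refine lt_of_le_of_lt (hb k) ?_
    exact pow_lt_one₀ h0 hq (Nat.succ_ne_zero k)
  have c1 := hkey (fun k => k + 1) (fun k => le_rfl) 1 (by simp)
  have c2 := hkey (fun k => 2 * k + 1) (fun k => by omega) (-1) (by simp)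
  have c3 := hkey (fun k => k + 1) (fun k => le_rfl) (-1) (by simp)
  have c4 := hkey (fun k => 2 * k + 2) (fun k => by omega) (-1) (by simp)
  simp only [one_mul, neg_one_mul] at c1 c2 c3 c4
  obtain ⟨hA, hA0⟩ := euler_aux c1.1 c1.2
  obtain ⟨hO, hO0⟩ := euler_aux c2.1 c2.2
  obtain ⟨hP, hP0⟩ := euler_aux c3.1 c3.2
  obtain ⟨hE, hE0⟩ := euler_aux c4.1 c4.2
  simp only [← sub_eq_add_neg] at hO hO0 hP hP0 hE hE0
  set A := ∏' k : ℕ, (1 + q ^ (k + 1)) with hAdef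
  set O := ∏' k : ℕ, (1 - q ^ (2 * k + 1)) with hOdef
  set P := ∏' k : ℕ, (1 - q ^ (k + 1)) with hPdef
  set E := ∏' k : ℕ, (1 - q ^ (2 * k + 2)) with hEdef
  -- parity splitting: O * E = P
  have hOE : O * E = P := by
    have := tprod_even_mul_odd (f := fun n => 1 - q ^ (n + 1))
      (by simpa using hO.multipliable) (by
        have : (fun k : ℕ => 1 - q ^ (2 * k + 1 + 1)) = fun k : ℕ => 1 - q ^ (2 * k + 2) := by
          funext k; ring_nf
        simpa [this] using hE.multipliable)
    simpa using this
  -- telescoping: A * P = E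
  have hAP : A * P = E := by
    rw [hAdef, hPdef, ← hA.multipliable.tprod_mul hP.multipliable, hEdef]
    refine tprod_congr fun k => ?_
    have h2 : (2 : ℕ) * k + 2 = (k + 1) + (k + 1) := by ring
    rw [h2, pow_add]; ring
  have hAO : A * O = 1 := by
    have : (A * O) * E = 1 * E := by rw [mul_assoc, hOE, hAP, one_mul]
    exact mul_right_cancel₀ hE0 this
  rw [(hasProd_inv hA hA0).tprod_eq]
  have hOA : O * A = 1 := by rw [mul_comm]; exact hAO
  exact (eq_inv_of_mul_eq_one_left hOA).symm
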